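/- Let 𝒢 be a TVG in class B with bound Δ whose underlying connected graph has n ≥ 2 vertices, and let s be any vertex. Then the minimal arrival time OPT of a covering journey from s at time 0 satisfies n − 1 ≤ OPT ≤ Δ(2n − 3); in particular, the journey obtained by following any covering walk of length at most 2n − 3 from s (waiting at most Δ − 1 steps before each edge traversal) is a covering journey whose arrival time is at most Δ(2n − 3) < 2Δ(n − 1) ≤ 2Δ·OPT. -/

import Mathlib

/-- A time-varying graph (TVG): an underlying simple graph together with a presence
function telling when each (directed rendering of an) edge is available; every edge
takes one time step to cross. -/
structure TVG (V : Type) where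
  G : SimpleGraph V
  avail : V → V → ℕ → Prop

namespace TVG

variable {V : Type}

/-- A step of a journey: traverse the edge from `x.1` to `x.2.1`, starting at time
`x.2.2` and arriving at time `x.2.2 + 1`. -/
abbrev Step (V : Type) := V × V × ℕ

/-- Consecutive steps of a journey: the next step starts where the previous one ended,
at a strictly later time (waiting in between is allowed). -/
def Linked (a b : Step V) : Prop := b.1 = a.2.1 ∧ a.2.2 + 1 ≤ b.2.2

/-- A journey: each step crosses an edge of the underlying graph that is available at
that time, and consecutive steps are linked. -/
def IsJourney (𝒢 : TVG V) (J : List (Step V)) : Prop :=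
  (∀ x ∈ J, 𝒢.G.Adj x.1 x.2.1 ∧ 𝒢.avail x.1 x.2.1 x.2.2) ∧ J.Chain' Linked

/-- The journey starts at vertex `u`. -/
def startsAt (J : List (Step V)) (u : V) : Prop := ∀ x ∈ J.head?, x.1 = u

/-- The journey departs at or after time `t`. -/
def departsAfter (J : List (Step V)) (t : ℕ) : Prop := ∀ x ∈ J.head?, t ≤ x.2.2

/-- Departure date of a journey started at time `t0`. -/
def departure (J : List (Step V)) (t0 : ℕ) : ℕ := (J.head?).elim t0 fun x => x.2.2

/-- Arrival date of a journey started at time `t0`. -/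
def arrival (J : List (Step V)) (t0 : ℕ) : ℕ := (J.getLast?).elim t0 fun x => x.2.2 + 1

/-- Final vertex of a journey started at vertex `s`. -/
def endAt (J : List (Step V)) (s : V) : V := (J.getLast?).elim s fun x => x.2.1

/-- The journey, started at `s`, visits (covers) vertex `v`. -/
def visits (J : List (Step V)) (s v : V) : Prop := v = s ∨ ∃ x ∈ J, x.2.1 = v

/-- A covering journey from `s` starting at time `0`: a journey that starts at `s`
and visits every vertex. -/
def IsCoveringFrom (𝒢 : TVG V) (J : List (Step V)) (s : V) : Prop :=
  𝒢.IsJourney J ∧ startsAt J s ∧ ∀ v : V, visits J s v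

/-- Class `R` (recurrent edges): connected underlying graph, lifetime `ℕ`, and every
edge is available at arbitrarily late times. -/
def ClassR (𝒢 : TVG V) : Prop :=
  𝒢.G.Connected ∧ ∀ u v, 𝒢.G.Adj u v → ∀ t, ∃ t', t < t' ∧ 𝒢.avail u v t'

/-- Class `B` (time-bounded recurrent edges): every edge is available at some time in
`[t, t + Δ)` for every `t`. -/
def ClassB (𝒢 : TVG V) (Δ : ℕ) : Prop :=
  𝒢.G.Connected ∧ ∀ u v, 𝒢.G.Adj u v → ∀ t, ∃ t', t ≤ t' ∧ t' < t + Δ ∧ 𝒢.avail u v t'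

/-- Class `P` (periodic edges): the presence function is periodic with period `p`. -/
def ClassP (𝒢 : TVG V) (p : ℕ) : Prop :=
  𝒢.G.Connected ∧ ∀ u v t, 𝒢.avail u v t ↔ 𝒢.avail u v (t + p)

/-- Presence function obtained by running the given (possibly time-dependent) edge
relations for the given durations, one block after another, starting at time `0`;
each block relation receives the local time within its block. -/
def schedAvail : List ((V → V → ℕ → Prop) × ℕ) → V → V → ℕ → Prop
  | [], _, _, _ => False
  | (r, d) :: rest, u, v, t => if t < d then r u v t else schedAvail rest u v (t - d)

end TVG

open TVG


open SimpleGraph in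
lemma exists_closed_cover {V : Type} [DecidableEq V] {G : SimpleGraph V} (s : V) :
    ∀ S : Finset V, s ∈ S → (∀ u ∈ S, ∃ W : G.Walk s u, ∀ x ∈ W.support, x ∈ S) →
    ∃ W : G.Walk s s, (∀ x ∈ W.support, x ∈ S) ∧ (∀ u ∈ S, u ∈ W.support) ∧
      W.length ≤ 2 * (S.card - 1) := by
  intro S
  induction S using Finset.strongInduction with
  | _ S ih =>
    intro hs hconn
    by_cases hS : ∀ u ∈ S, u = s
    · exact ⟨Walk.nil, by simpa using hs, fun u hu => by simp [hS u hu], by simp⟩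
    push_neg at hS
    obtain ⟨u0, hu0S, hu0⟩ := hS
    -- distance within S
    set D : V → Set ℕ := fun u => {n | ∃ W : G.Walk s u, (∀ x ∈ W.support, x ∈ S) ∧ W.length = n} with hD
    set d : V → ℕ := fun u => sInf (D u) with hd
    have hDne : ∀ u ∈ S, (D u).Nonempty := by
      intro u hu
      obtain ⟨W, hW⟩ := hconn u hu
      exact ⟨W.length, W, hW, rfl⟩
    have hmem : ∀ u ∈ S, ∃ W : G.Walk s u, (∀ x ∈ W.support, x ∈ S) ∧ W.length = d u :=
      fun u hu => Nat.sInf_mem (hDne u hu)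
    obtain ⟨v, hvS, hvmax⟩ := Finset.exists_max_image S d ⟨s, hs⟩
    have hdu0 : 1 ≤ d u0 := by
      by_contra h
      obtain ⟨W, _, hWl⟩ := hmem u0 hu0S
      have : W.length = 0 := by omega
      exact hu0 (Walk.eq_of_length_eq_zero this).symm
    have hds : d s = 0 := by
      have : (0 : ℕ) ∈ D s := ⟨Walk.nil, by simpa using hs, rfl⟩
      exact Nat.le_zero.mp (Nat.sInf_le this)
    have hvs : v ≠ s := by
      intro h
      have := hvmax u0 hu0S
      rw [h, hds] at this
      omega
    -- avoidance
    have avoid : ∀ u ∈ S, u ≠ v → ∃ W : G.Walk s u, (∀ x ∈ W.support, x ∈ S) ∧ v ∉ W.support := by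
      intro u hu huv
      obtain ⟨W, hWs, hWl⟩ := hmem u hu
      refine ⟨W, hWs, fun hv => ?_⟩
      have h1 : d v ≤ (W.takeUntil v hv).length :=
        Nat.sInf_le ⟨W.takeUntil v hv, fun x hx => hWs x (Walk.support_takeUntil_subset _ _ hx), rfl⟩
      have h2 : (W.takeUntil v hv).length ≤ W.length := Walk.length_takeUntil_le _ _
      have h3 : d u ≤ d v := hvmax u hu
      have heq : (W.takeUntil v hv).length = W.length := by omega
      have hspec := W.take_spec hv
      have hlen : (W.takeUntil v hv).length + (W.dropUntil v hv).length = W.length := by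
        rw [← Walk.length_append, hspec]
      have : (W.dropUntil v hv).length = 0 := by omega
      exact huv (Walk.eq_of_length_eq_zero this).symm
    -- a neighbor u of v inside S
    obtain ⟨Wv, hWvs⟩ := hconn v hvS
    obtain ⟨u, hadj, q, hq⟩ := Walk.exists_eq_cons_of_ne hvs Wv.reverse
    have hue : u ∈ S := by
      have h1 : u ∈ Wv.reverse.support := by
        rw [hq, Walk.support_cons]
        exact List.mem_cons_of_mem _ q.start_mem_support
      rw [Walk.support_reverse, List.mem_reverse] at h1
      exact hWvs u h1
    have hune : u ≠ v := hadj.ne'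
    -- induction on S.erase v
    have hss : S.erase v ⊂ S := Finset.erase_ssubset hvS
    have hs' : s ∈ S.erase v := Finset.mem_erase.mpr ⟨fun h => hvs h.symm, hs⟩
    have hconn' : ∀ w ∈ S.erase v, ∃ W : G.Walk s w, ∀ x ∈ W.support, x ∈ S.erase v := by
      intro w hw
      obtain ⟨hwv, hwS⟩ := Finset.mem_erase.mp hw
      obtain ⟨W, hWs, hWv⟩ := avoid w hwS hwv
      exact ⟨W, fun x hx => Finset.mem_erase.mpr ⟨fun h => hWv (h ▸ hx), hWs x hx⟩⟩
    obtain ⟨W', hW's, hW'cov, hW'len⟩ := ih _ hss hs' hconn'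
    have hu' : u ∈ S.erase v := Finset.mem_erase.mpr ⟨hune, hue⟩
    have huW : u ∈ W'.support := hW'cov u hu'
    set W1 := W'.takeUntil u huW with hW1
    set W2 := W'.dropUntil u huW with hW2
    set det : G.Walk u u := Walk.cons hadj.symm (Walk.cons hadj Walk.nil) with hdet
    refine ⟨W1.append (det.append W2), ?_, ?_, ?_⟩
    · intro x hx
      rw [Walk.mem_support_append_iff, Walk.mem_support_append_iff] at hx
      rcases hx with hx | hx | hx
      · exact Finset.mem_of_mem_erase (hW's x (Walk.support_takeUntil_subset _ _ hx))
      · rw [hdet] at hx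
        simp [Walk.support_cons, Walk.support_nil] at hx
        rcases hx with rfl | rfl | rfl
        · exact hue
        · exact hvS
        · exact hue
      · exact Finset.mem_of_mem_erase (hW's x (Walk.support_dropUntil_subset _ _ hx))
    · intro w hw
      rw [Walk.mem_support_append_iff, Walk.mem_support_append_iff]
      by_cases hwv : w = v
      · subst hwv
        right; left
        rw [hdet]
        simp [Walk.support_cons]
      · have hw' : w ∈ W'.support := hW'cov w (Finset.mem_erase.mpr ⟨hwv, hw⟩)
        rw [← W'.take_spec huW, Walk.mem_support_append_iff] at hw'
        rcases hw' with hw' | hw'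
        · exact Or.inl hw'
        · exact Or.inr (Or.inr hw')
    · have hlen12 : W1.length + W2.length = W'.length := by
        rw [← Walk.length_append, W'.take_spec huW]
      have hdetlen : det.length = 2 := by simp [hdet]
      have hcard : (S.erase v).card = S.card - 1 := Finset.card_erase_of_mem hvS
      have hcard2 : 2 ≤ S.card := Finset.one_lt_card.mpr ⟨v, hvS, s, hs, hvs⟩
      rw [Walk.length_append, Walk.length_append, hdetlen]
      omega

open SimpleGraph in
lemma exists_cover_walk {V : Type} [Fintype V] [DecidableEq V] {G : SimpleGraph V}
    (hG : G.Connected) (hn : 2 ≤ Fintype.card V) (s : V) :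
    ∃ (w : V) (W : G.Walk s w), (∀ v, v ∈ W.support) ∧ W.length ≤ 2 * Fintype.card V - 3 := by
  have hconn : ∀ u ∈ (Finset.univ : Finset V), ∃ W : G.Walk s u, ∀ x ∈ W.support, x ∈ (Finset.univ : Finset V) := by
    intro u _
    obtain ⟨W⟩ := hG.preconnected s u
    exact ⟨W, fun x _ => Finset.mem_univ x⟩
  obtain ⟨W, _, hcov, hlen⟩ := exists_closed_cover s Finset.univ (Finset.mem_univ s) hconn
  rw [Finset.card_univ] at hlen
  obtain ⟨u0, hu0⟩ := Fintype.exists_ne_of_one_lt_card hn s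
  cases W with
  | nil =>
    exfalso
    have := hcov u0 (Finset.mem_univ u0)
    simp [Walk.support_nil] at this
    exact hu0 this
  | cons h p =>
    refine ⟨_, p.reverse, ?_, ?_⟩
    · intro v
      have hv := hcov v (Finset.mem_univ v)
      rw [Walk.support_cons, List.mem_cons] at hv
      rw [Walk.support_reverse, List.mem_reverse]
      rcases hv with rfl | hv
      · exact p.end_mem_support
      · exact hv
    · rw [Walk.length_reverse]
      have : (Walk.cons h p).length = p.length + 1 := Walk.length_cons h p
      omega


open TVG in
lemma TVG.arrival_cons {V : Type} (a : Step V) (J : List (Step V)) (t : ℕ) :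
    arrival (a :: J) t = arrival J (a.2.2 + 1) := by
  cases J with
  | nil => rfl
  | cons b l =>
    show ((a :: b :: l).getLast?.elim t fun x => x.2.2 + 1) = _
    rw [List.getLast?_cons_cons]
    cases hlast : (b :: l).getLast? with
    | none => simp at hlast
    | some y => simp [arrival, hlast]

open TVG in
lemma TVG.length_le_arrival {V : Type} :
    ∀ (J : List (Step V)), J.Chain' Linked → ∀ t : ℕ, (∀ x ∈ J.head?, t ≤ x.2.2) →
      t + J.length ≤ arrival J t := by
  intro J
  induction J with
  | nil => intro _ t _; simp [arrival]
  | cons a l ih =>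
    intro hch t hhd
    obtain ⟨h1, h2⟩ := List.isChain_cons.mp hch
    have hta : t ≤ a.2.2 := hhd a rfl
    have := ih h2 (a.2.2 + 1) (fun x hx => (h1 x hx).2)
    rw [arrival_cons]
    simp only [List.length_cons]
    omega

open TVG in
lemma TVG.exists_journey {V : Type} (𝒢 : TVG V) (Δ : ℕ)
    (hB : ∀ u v, 𝒢.G.Adj u v → ∀ t, ∃ t', t ≤ t' ∧ t' < t + Δ ∧ 𝒢.avail u v t') :
    ∀ (L : List (V × V)), (∀ p ∈ L, 𝒢.G.Adj p.1 p.2) → L.Chain' (fun a b => b.1 = a.2) →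
    ∀ t, ∃ J : List (Step V),
      J.map (fun x => (x.1, x.2.1)) = L ∧
      (∀ x ∈ J, 𝒢.G.Adj x.1 x.2.1 ∧ 𝒢.avail x.1 x.2.1 x.2.2) ∧
      J.Chain' Linked ∧
      (∀ x ∈ J.head?, t ≤ x.2.2) ∧
      arrival J t ≤ t + Δ * L.length := by
  intro L
  induction L with
  | nil =>
    intro _ _ t
    exact ⟨[], rfl, by simp, List.isChain_nil, by simp, by simp [arrival]⟩
  | cons p L' ih =>
    intro hadj hch t
    obtain ⟨t', ht1, ht2, hav⟩ := hB p.1 p.2 (hadj p (List.mem_cons_self)) t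
    obtain ⟨hch1, hch2⟩ := List.isChain_cons.mp hch
    obtain ⟨J', hmap, hprop, hchJ, hhead, harr⟩ :=
      ih (fun q hq => hadj q (List.mem_cons_of_mem p hq)) hch2 (t' + 1)
    refine ⟨(p.1, p.2, t') :: J', ?_, ?_, ?_, ?_, ?_⟩
    · simp [hmap]
    · intro x hx
      rcases List.mem_cons.mp hx with rfl | hx
      · exact ⟨hadj p (List.mem_cons_self), hav⟩
      · exact hprop x hx
    · unfold List.Chain'
      rw [List.isChain_cons]
      refine ⟨fun y hy => ⟨?_, hhead y hy⟩, hchJ⟩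
      have : (y.1, y.2.1) ∈ L'.head? := by
        rw [← hmap, List.head?_map]
        exact Option.mem_map_of_mem _ hy
      exact hch1 _ this
    · intro x hx
      simp only [List.head?_cons, Option.mem_some_iff] at hx
      subst hx
      exact ht1
    · rw [arrival_cons]
      simp only [List.length_cons, Nat.mul_succ]
      have := harr
      omega


/-- For a TVG of class `B` with bound `Δ` on a connected graph with
`n ≥ 2` vertices, the minimal covering arrival time `OPT` from any `s` satisfies
`n - 1 ≤ OPT ≤ Δ(2n - 3)`; in particular, following any covering walk of length at most
`2n - 3` (waiting at most `Δ - 1` steps before each edge) yields a covering journey with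
arrival time at most `Δ(2n - 3) < 2Δ(n - 1) ≤ 2Δ·OPT`. -/
theorem classB_twoDelta_approx {V : Type} [Fintype V] (𝒢 : TVG V) (Δ : ℕ)
    (hB : 𝒢.ClassB Δ) (hn : 2 ≤ Fintype.card V) (s : V) (OPT : ℕ)
    (hOPT : IsLeast {t : ℕ | ∃ J, 𝒢.IsCoveringFrom J s ∧ arrival J 0 = t} OPT) :
    (Fintype.card V - 1 ≤ OPT ∧ OPT ≤ Δ * (2 * Fintype.card V - 3)) ∧
    (∀ (w : V) (W : 𝒢.G.Walk s w), (∀ v : V, v ∈ W.support) →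
      W.length ≤ 2 * Fintype.card V - 3 →
      ∃ J, 𝒢.IsCoveringFrom J s ∧
        J.map (fun x => (x.1, x.2.1)) = W.darts.map (fun d => d.toProd) ∧
        arrival J 0 ≤ Δ * (2 * Fintype.card V - 3)) ∧
    Δ * (2 * Fintype.card V - 3) < 2 * Δ * (Fintype.card V - 1) ∧
    2 * Δ * (Fintype.card V - 1) ≤ 2 * Δ * OPT := by
  classical
  obtain ⟨hconn, havail⟩ := hB
  have hΔ : 1 ≤ Δ := by
    obtain ⟨u0, hu0⟩ := Fintype.exists_ne_of_one_lt_card hn s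
    obtain ⟨p⟩ := hconn.preconnected s u0
    obtain ⟨c, hadj, _, _⟩ := SimpleGraph.Walk.exists_eq_cons_of_ne (Ne.symm hu0) p
    obtain ⟨t', h1, h2, _⟩ := havail s c hadj 0
    omega
  set n := Fintype.card V with hncard
  have key : ∀ (w : V) (W : 𝒢.G.Walk s w), (∀ v : V, v ∈ W.support) →
      W.length ≤ 2 * n - 3 →
      ∃ J, 𝒢.IsCoveringFrom J s ∧
        J.map (fun x => (x.1, x.2.1)) = W.darts.map (fun d => d.toProd) ∧
        arrival J 0 ≤ Δ * (2 * n - 3) := by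
    intro w W hcov hlen
    have hadjL : ∀ p ∈ W.darts.map (fun d => d.toProd), 𝒢.G.Adj p.1 p.2 := by
      intro p hp
      obtain ⟨d, hd, rfl⟩ := List.mem_map.mp hp
      exact d.adj
    have hchL : (W.darts.map (fun d => d.toProd)).Chain' (fun a b => b.1 = a.2) := by
      unfold List.Chain'
      rw [List.isChain_map]
      exact (W.isChain_dartAdj_darts).imp (fun _ _ h => h.symm)
    obtain ⟨J, hmap, hprop, hchJ, hhead, harr⟩ :=
      TVG.exists_journey 𝒢 Δ havail _ hadjL hchL 0
    have hsnd : J.map (fun x => x.2.1) = W.support.tail := by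
      have := congrArg (List.map Prod.snd) hmap
      simpa [List.map_map, Function.comp_def, SimpleGraph.Walk.map_snd_darts] using this
    refine ⟨J, ⟨⟨hprop, hchJ⟩, ?_, ?_⟩, hmap, ?_⟩
    · -- startsAt
      intro x hx
      have h1 : (x.1, x.2.1) ∈ (W.darts.map (fun d => d.toProd)).head? := by
        rw [← hmap, List.head?_map]
        exact Option.mem_map_of_mem _ hx
      cases W with
      | nil => simp [SimpleGraph.Walk.darts_nil] at h1
      | cons h p =>
        rw [SimpleGraph.Walk.darts_cons] at h1
        simp only [List.map_cons, List.head?_cons, Option.mem_some_iff, Prod.mk.injEq] at h1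
        exact h1.1.symm
    · -- visits
      intro v
      have hv := hcov v
      rw [SimpleGraph.Walk.support_eq_cons, List.mem_cons] at hv
      rcases hv with rfl | hv
      · exact Or.inl rfl
      · rw [← hsnd] at hv
        obtain ⟨x, hxJ, hxv⟩ := List.mem_map.mp hv
        exact Or.inr ⟨x, hxJ, hxv⟩
    · -- arrival bound
      have hWdlen : (W.darts.map (fun d => d.toProd)).length = W.length := by
        rw [List.length_map, SimpleGraph.Walk.length_darts]
      rw [hWdlen, Nat.zero_add] at harr
      exact le_trans harr (Nat.mul_le_mul le_rfl hlen)
  obtain ⟨w, W, hWcov, hWlen⟩ := exists_cover_walk hconn hn s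
  obtain ⟨J, hJcov, _, hJarr⟩ := key w W hWcov hWlen
  have hupper : OPT ≤ Δ * (2 * n - 3) := le_trans (hOPT.2 ⟨J, hJcov, rfl⟩) hJarr
  obtain ⟨J0, ⟨⟨_, hch0⟩, _, hvis0⟩, harr0⟩ := hOPT.1
  have hlow : n - 1 ≤ OPT := by
    have hsub : (Finset.univ : Finset V) ⊆ insert s (J0.map (fun x => x.2.1)).toFinset := by
      intro v _
      rcases hvis0 v with rfl | ⟨x, hx, hxv⟩
      · exact Finset.mem_insert_self _ _
      · exact Finset.mem_insert_of_mem (List.mem_toFinset.mpr (hxv ▸ List.mem_map_of_mem hx))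
    have h1 : n ≤ J0.length + 1 := by
      calc n = (Finset.univ : Finset V).card := (Finset.card_univ).symm
        _ ≤ (insert s (J0.map (fun x => x.2.1)).toFinset).card := Finset.card_le_card hsub
        _ ≤ (J0.map (fun x => x.2.1)).toFinset.card + 1 := Finset.card_insert_le _ _
        _ ≤ (J0.map (fun x => x.2.1)).length + 1 :=
            Nat.add_le_add_right (List.toFinset_card_le _) 1
        _ = J0.length + 1 := by rw [List.length_map]
    have h2 : J0.length ≤ arrival J0 0 := by
      have := TVG.length_le_arrival J0 hch0 0 (fun x _ => Nat.zero_le _)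
      omega
    omega
  refine ⟨⟨hlow, hupper⟩, key, ?_, ?_⟩
  · calc Δ * (2 * n - 3) < Δ * (2 * n - 3) + Δ := by omega
      _ = Δ * (2 * n - 2) := by rw [← Nat.mul_succ]; congr 1; omega
      _ = 2 * Δ * (n - 1) := by rw [mul_comm 2 Δ, mul_assoc]; congr 1; omega
  · exact Nat.mul_le_mul le_rfl hlow
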